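/- Let A₁, …, A_m be nonnegative n×n real matrices. Then for the Hadamard weighted geometric mean with equal weights 1/m: ρ(A₁^{(1/m)} ∘ ⋯ ∘ A_m^{(1/m)}) ≤ ρ(A₁A₂⋯A_m)^{1/m}. -/

import Mathlib

open Matrix

/-- Spectral radius of a real matrix: max modulus of its (complex) eigenvalues. -/
noncomputable def specRad {N : Type*} [Fintype N] [DecidableEq N] (A : Matrix N N ℝ) : ℝ :=
  (spectralRadius ℂ (A.map Complex.ofReal)).toReal

/-- Operator norm induced by the Euclidean (ℓ²) norm. -/
noncomputable def l2OpNorm {N : Type*} [Fintype N] [DecidableEq N] (A : Matrix N N ℝ) : ℝ :=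
  ‖Matrix.toEuclideanCLM (𝕜 := ℝ) A‖

/-- Entrywise α-th power (with the convention 0^0 = 1, as for `Real.rpow`). -/
noncomputable def hadPow {N : Type*} (A : Matrix N N ℝ) (α : ℝ) : Matrix N N ℝ :=
  fun i j => A i j ^ α

/-- Hadamard weighted geometric mean `A₁^{(α₁)} ∘ ⋯ ∘ A_m^{(α_m)}`. -/
noncomputable def hadGeo {m : ℕ} {N : Type*} (A : Fin m → Matrix N N ℝ) (α : Fin m → ℝ) :
    Matrix N N ℝ :=
  fun i j => ∏ k, (A k i j) ^ (α k)

section Aux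

open Filter Finset
open Fin.NatCast
open scoped ENNReal NNReal
set_option linter.unusedSectionVars false

attribute [local instance] Matrix.linftyOpNormedRing Matrix.linftyOpNormedAlgebra
  Matrix.linftyOpNormedAddCommGroup

variable {m : ℕ} {N : Type*} [Fintype N] [DecidableEq N]

/-- Hölder's inequality for `m` functions with exponents `1/m`. -/
private lemma holder_m (hm : 0 < m) {ι : Type*} (s : Finset ι) (f : Fin m → ι → ℝ)
    (hf : ∀ r x, 0 ≤ f r x) :
    ∑ x ∈ s, ∏ r, f r x ^ ((1 : ℝ) / m) ≤ ∏ r, (∑ x ∈ s, f r x) ^ ((1 : ℝ) / m) := by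
  have hm' : (0 : ℝ) < m := by exact_mod_cast hm
  have hw : (0 : ℝ) < 1 / m := by positivity
  by_cases h : ∃ r, ∑ x ∈ s, f r x = 0
  · obtain ⟨r₀, hr₀⟩ := h
    have hz : ∀ x ∈ s, f r₀ x = 0 :=
      (Finset.sum_eq_zero_iff_of_nonneg (fun x _ => hf r₀ x)).1 hr₀
    have hzero : ∑ x ∈ s, ∏ r, f r x ^ ((1 : ℝ) / m) = 0 := by
      refine Finset.sum_eq_zero fun x hx => ?_
      refine Finset.prod_eq_zero (Finset.mem_univ r₀) ?_
      rw [hz x hx, Real.zero_rpow hw.ne']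
    rw [hzero]
    exact Finset.prod_nonneg fun r _ =>
      Real.rpow_nonneg (Finset.sum_nonneg fun x _ => hf r x) _
  · push_neg at h
    set S : Fin m → ℝ := fun r => ∑ x ∈ s, f r x with hS
    have hSpos : ∀ r, 0 < S r := fun r =>
      lt_of_le_of_ne (Finset.sum_nonneg fun x _ => hf r x) (Ne.symm (h r))
    have hprodpos : 0 ≤ ∏ r, S r ^ ((1 : ℝ) / m) :=
      Finset.prod_nonneg fun r _ => Real.rpow_nonneg (hSpos r).le _
    have key : ∀ x ∈ s, ∏ r, f r x ^ ((1 : ℝ) / m)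
        ≤ (∏ r, S r ^ ((1 : ℝ) / m)) * ∑ r, 1 / (m : ℝ) * (f r x / S r) := by
      intro x _
      have amgm := Real.geom_mean_le_arith_mean_weighted Finset.univ
        (fun _ : Fin m => (1 : ℝ) / m) (fun r => f r x / S r)
        (fun _ _ => hw.le)
        (by rw [Finset.sum_const, Finset.card_univ, Fintype.card_fin, nsmul_eq_mul]
            field_simp)
        (fun r _ => div_nonneg (hf r x) (hSpos r).le)
      calc ∏ r, f r x ^ ((1 : ℝ) / m)
          = ∏ r, S r ^ ((1 : ℝ) / m) * (f r x / S r) ^ ((1 : ℝ) / m) := by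
            refine Finset.prod_congr rfl fun r _ => ?_
            rw [← Real.mul_rpow (hSpos r).le (div_nonneg (hf r x) (hSpos r).le),
              mul_div_cancel₀ _ (hSpos r).ne']
        _ = (∏ r, S r ^ ((1 : ℝ) / m)) * ∏ r, (f r x / S r) ^ ((1 : ℝ) / m) :=
            Finset.prod_mul_distrib
        _ ≤ _ := mul_le_mul_of_nonneg_left amgm hprodpos
    calc ∑ x ∈ s, ∏ r, f r x ^ ((1 : ℝ) / m)
        ≤ ∑ x ∈ s, (∏ r, S r ^ ((1 : ℝ) / m)) * ∑ r, 1 / (m : ℝ) * (f r x / S r) :=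
          Finset.sum_le_sum key
      _ = (∏ r, S r ^ ((1 : ℝ) / m)) * ∑ x ∈ s, ∑ r, 1 / (m : ℝ) * (f r x / S r) := by
          rw [Finset.mul_sum]
      _ = ∏ r, S r ^ ((1 : ℝ) / m) := by
          have h1 : ∑ x ∈ s, ∑ r, 1 / (m : ℝ) * (f r x / S r) = 1 := by
            rw [Finset.sum_comm]
            have h2 : ∀ r : Fin m, ∑ x ∈ s, 1 / (m : ℝ) * (f r x / S r) = 1 / m := by
              intro r
              rw [← Finset.mul_sum, ← Finset.sum_div]
              rw [div_self (hSpos r).ne', mul_one]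
            rw [Finset.sum_congr rfl fun r _ => h2 r, Finset.sum_const, Finset.card_univ,
              Fintype.card_fin, nsmul_eq_mul]
            field_simp
          rw [h1, mul_one]

private lemma hadGeo_nonneg (M : Fin m → Matrix N N ℝ) (hM : ∀ r i j, 0 ≤ M r i j) (i j : N) :
    0 ≤ hadGeo M (fun _ => (1 : ℝ) / m) i j :=
  Finset.prod_nonneg fun r _ => Real.rpow_nonneg (hM r i j) _

private lemma mul_entry_nonneg {X Y : Matrix N N ℝ} (hX : ∀ i j, 0 ≤ X i j)
    (hY : ∀ i j, 0 ≤ Y i j) (i j : N) : 0 ≤ (X * Y) i j := by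
  rw [Matrix.mul_apply]
  exact Finset.sum_nonneg fun t _ => mul_nonneg (hX i t) (hY t j)

private lemma pow_entry_nonneg {X : Matrix N N ℝ} (hX : ∀ i j, 0 ≤ X i j) (s : ℕ) (i j : N) :
    0 ≤ (X ^ s) i j := by
  induction s generalizing i j with
  | zero =>
    rw [pow_zero, Matrix.one_apply]
    split <;> norm_num
  | succ s ih =>
    rw [pow_succ]
    exact mul_entry_nonneg (fun i j => ih i j) hX i j

private lemma mul_entry_mono {X X' Y Y' : Matrix N N ℝ}
    (hY : ∀ i j, 0 ≤ Y i j) (hX' : ∀ i j, 0 ≤ X' i j)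
    (h1 : ∀ i j, X i j ≤ X' i j) (h2 : ∀ i j, Y i j ≤ Y' i j) (i j : N) :
    (X * Y) i j ≤ (X' * Y') i j := by
  rw [Matrix.mul_apply, Matrix.mul_apply]
  exact Finset.sum_le_sum fun t _ =>
    mul_le_mul (h1 i t) (h2 t j) (hY t j) (hX' i t)

private lemma hadGeo_mul_le (hm : 0 < m) (M M' : Fin m → Matrix N N ℝ)
    (hM : ∀ r i j, 0 ≤ M r i j) (hM' : ∀ r i j, 0 ≤ M' r i j) (i j : N) :
    (hadGeo M (fun _ => (1 : ℝ) / m) * hadGeo M' (fun _ => (1 : ℝ) / m)) i j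
      ≤ hadGeo (fun r => M r * M' r) (fun _ => (1 : ℝ) / m) i j := by
  rw [Matrix.mul_apply]
  unfold hadGeo
  calc ∑ t, (∏ r, M r i t ^ ((1 : ℝ) / m)) * ∏ r, M' r t j ^ ((1 : ℝ) / m)
      = ∑ t, ∏ r, (M r i t * M' r t j) ^ ((1 : ℝ) / m) := by
        refine Finset.sum_congr rfl fun t _ => ?_
        rw [← Finset.prod_mul_distrib]
        exact Finset.prod_congr rfl fun r _ =>
          (Real.mul_rpow (hM r i t) (hM' r t j)).symm
    _ ≤ ∏ r, (∑ t, M r i t * M' r t j) ^ ((1 : ℝ) / m) :=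
        holder_m hm Finset.univ (fun r t => M r i t * M' r t j)
          (fun r t => mul_nonneg (hM r i t) (hM' r t j))
    _ = ∏ r, ((M r * M' r) i j) ^ ((1 : ℝ) / m) := by
        exact Finset.prod_congr rfl fun r _ => by rw [Matrix.mul_apply]

private lemma hadGeo_reindex (M : Fin m → Matrix N N ℝ) (e : Fin m ≃ Fin m) :
    hadGeo (fun r => M (e r)) (fun _ => (1 : ℝ) / m) = hadGeo M (fun _ => (1 : ℝ) / m) := by
  funext i j
  exact Equiv.prod_comp e fun r => M r i j ^ ((1 : ℝ) / m)

variable [NeZero m]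

/-- `Wc A r s` is the ordered product `A r * A (r+1) * ⋯` of length `s`, indices mod `m`. -/
private def Wc (A : Fin m → Matrix N N ℝ) : Fin m → ℕ → Matrix N N ℝ
  | _, 0 => 1
  | r, s + 1 => A r * Wc A (r + 1) s

private lemma Wc_zero (A : Fin m → Matrix N N ℝ) (r : Fin m) : Wc A r 0 = 1 := rfl

private lemma Wc_succ (A : Fin m → Matrix N N ℝ) (r : Fin m) (s : ℕ) :
    Wc A r (s + 1) = A r * Wc A (r + 1) s := rfl

private lemma Wc_nonneg (A : Fin m → Matrix N N ℝ) (hA : ∀ k i j, 0 ≤ A k i j)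
    (r : Fin m) (s : ℕ) (i j : N) : 0 ≤ Wc A r s i j := by
  induction s generalizing r i j with
  | zero =>
    rw [Wc_zero, Matrix.one_apply]
    split <;> norm_num
  | succ s ih =>
    rw [Wc_succ]
    exact mul_entry_nonneg (hA r) (fun i j => ih (r + 1) i j) i j

private lemma Wc_add (A : Fin m → Matrix N N ℝ) (r : Fin m) (a b : ℕ) :
    Wc A r (a + b) = Wc A r a * Wc A (r + (a : Fin m)) b := by
  induction a generalizing r with
  | zero => simp [Wc_zero]
  | succ a ih =>
    have : a + 1 + b = (a + b) + 1 := by omega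
    rw [this, Wc_succ, Wc_succ, ih (r + 1), mul_assoc]
    congr 2
    push_cast
    abel

private lemma Wc_pow (A : Fin m → Matrix N N ℝ) (r : Fin m) (k : ℕ) :
    Wc A r (m * k) = Wc A r m ^ k := by
  induction k with
  | zero => simp [Wc_zero]
  | succ k ih =>
    have : m * (k + 1) = m + m * k := by ring
    rw [this, Wc_add, Fin.natCast_self, add_zero, ih, pow_succ']

private lemma Wc_eq_ofFn (A : Fin m → Matrix N N ℝ) (s : ℕ) (r : Fin m) :
    Wc A r s = (List.ofFn fun t : Fin s => A (r + (t : ℕ))).prod := by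
  induction s generalizing r with
  | zero => simp [Wc_zero]
  | succ s ih =>
    rw [List.ofFn_succ, List.prod_cons, Wc_succ, ih (r + 1)]
    congr 1
    · norm_num
    · refine congrArg List.prod (congrArg List.ofFn (funext fun t => ?_))
      congr 1
      rw [Fin.val_succ]
      push_cast
      abel

private lemma Wc_zero_m (A : Fin m → Matrix N N ℝ) :
    Wc A 0 m = (List.ofFn A).prod := by
  rw [Wc_eq_ofFn]
  refine congrArg List.prod (congrArg List.ofFn (funext fun t => ?_))
  rw [zero_add, Fin.cast_val_eq_self]

/-- core entrywise estimate: `(hadGeo A)^s ≤ hadGeo (fun r => Wc A r s)`. -/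
private lemma pow_hadGeo_le (hm : 0 < m) (A : Fin m → Matrix N N ℝ)
    (hA : ∀ k i j, 0 ≤ A k i j) (s : ℕ) (i j : N) :
    (hadGeo A (fun _ => (1 : ℝ) / m) ^ s) i j
      ≤ hadGeo (fun r => Wc A r s) (fun _ => (1 : ℝ) / m) i j := by
  have hw : (0 : ℝ) < 1 / m := by positivity
  induction s generalizing i j with
  | zero =>
    rw [pow_zero]
    refine le_of_eq ?_
    unfold hadGeo
    rcases eq_or_ne i j with rfl | hij
    · simp [Wc_zero, Matrix.one_apply_eq]
    · rw [Matrix.one_apply_ne hij]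
      refine (Finset.prod_eq_zero (Finset.mem_univ ⟨0, hm⟩) ?_).symm
      show Wc A ⟨0, hm⟩ 0 i j ^ ((1 : ℝ) / m) = 0
      rw [Wc_zero, Matrix.one_apply_ne hij, Real.zero_rpow hw.ne']
  | succ s ih =>
    rw [pow_succ']
    calc (hadGeo A (fun _ => (1 : ℝ) / m) * hadGeo A (fun _ => (1 : ℝ) / m) ^ s) i j
        ≤ (hadGeo A (fun _ => (1 : ℝ) / m) *
            hadGeo (fun r => Wc A (r + 1) s) (fun _ => (1 : ℝ) / m)) i j := by
          refine mul_entry_mono (pow_entry_nonneg (hadGeo_nonneg A hA) s)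
            (hadGeo_nonneg A hA) (fun i j => le_rfl) ?_ i j
          intro i j
          have := hadGeo_reindex (fun r => Wc A r s) (Equiv.addRight (1 : Fin m))
          calc (hadGeo A (fun _ => (1 : ℝ) / m) ^ s) i j
              ≤ hadGeo (fun r => Wc A r s) (fun _ => (1 : ℝ) / m) i j := ih i j
            _ = hadGeo (fun r => Wc A (r + 1) s) (fun _ => (1 : ℝ) / m) i j := by
                rw [show (fun r => Wc A (r + 1) s) = fun r =>
                  (fun r' => Wc A r' s) ((Equiv.addRight (1 : Fin m)) r) from rfl, this]
      _ ≤ hadGeo (fun r => A r * Wc A (r + 1) s) (fun _ => (1 : ℝ) / m) i j :=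
          hadGeo_mul_le hm A (fun r => Wc A (r + 1) s) hA
            (fun r => Wc_nonneg A hA (r + 1) s) i j
      _ = hadGeo (fun r => Wc A r (s + 1)) (fun _ => (1 : ℝ) / m) i j := rfl

/-- row sums of a nonneg matrix are bounded by the linfty norm of its complexification. -/
private lemma row_sum_le_norm (B : Matrix N N ℝ) (hB : ∀ i j, 0 ≤ B i j) (i : N) :
    ∑ j, B i j ≤ ‖B.map Complex.ofReal‖ := by
  rw [Matrix.linfty_opNorm_def]
  have h1 : ∑ j, ‖(B.map Complex.ofReal) i j‖₊
      ≤ Finset.univ.sup fun i => ∑ j, ‖(B.map Complex.ofReal) i j‖₊ :=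
    Finset.le_sup (f := fun i => ∑ j, ‖(B.map Complex.ofReal) i j‖₊) (Finset.mem_univ i)
  have h2 : ((∑ j, ‖(B.map Complex.ofReal) i j‖₊ : ℝ≥0) : ℝ) = ∑ j, B i j := by
    push_cast
    refine Finset.sum_congr rfl fun j _ => ?_
    rw [Matrix.map_apply, Complex.norm_real, Real.norm_eq_abs,
      abs_of_nonneg (hB i j)]
  rw [← h2]
  exact_mod_cast h1

private lemma norm_map_mono {B D : Matrix N N ℝ} (hB : ∀ i j, 0 ≤ B i j)
    (hBD : ∀ i j, B i j ≤ D i j) :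
    ‖B.map Complex.ofReal‖ ≤ ‖D.map Complex.ofReal‖ := by
  rw [Matrix.linfty_opNorm_def, Matrix.linfty_opNorm_def]
  rw [NNReal.coe_le_coe]
  refine Finset.sup_mono_fun fun i _ => Finset.sum_le_sum fun j _ => ?_
  rw [← NNReal.coe_le_coe, coe_nnnorm, coe_nnnorm, Matrix.map_apply, Matrix.map_apply,
    Complex.norm_real, Complex.norm_real, Real.norm_eq_abs, Real.norm_eq_abs,
    abs_of_nonneg (hB i j), abs_of_nonneg ((hB i j).trans (hBD i j))]
  exact hBD i j

private lemma norm_hadGeo_le (hm : 0 < m) [Nonempty N] (M : Fin m → Matrix N N ℝ)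
    (hM : ∀ r i j, 0 ≤ M r i j) :
    ‖(hadGeo M (fun _ => (1 : ℝ) / m)).map Complex.ofReal‖
      ≤ ∏ r, ‖(M r).map Complex.ofReal‖ ^ ((1 : ℝ) / m) := by
  obtain ⟨i₀, -, hsup⟩ := Finset.exists_mem_eq_sup Finset.univ Finset.univ_nonempty
    (fun i => ∑ j, ‖((hadGeo M (fun _ => (1 : ℝ) / m)).map Complex.ofReal) i j‖₊)
  rw [Matrix.linfty_opNorm_def, hsup]
  have h2 : ((∑ j, ‖((hadGeo M (fun _ => (1 : ℝ) / m)).map Complex.ofReal) i₀ j‖₊ : ℝ≥0) : ℝ)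
      = ∑ j, hadGeo M (fun _ => (1 : ℝ) / m) i₀ j := by
    push_cast
    refine Finset.sum_congr rfl fun j _ => ?_
    rw [Matrix.map_apply, Complex.norm_real, Real.norm_eq_abs,
      abs_of_nonneg (hadGeo_nonneg M hM i₀ j)]
  rw [h2]
  calc ∑ j, hadGeo M (fun _ => (1 : ℝ) / m) i₀ j
      = ∑ j, ∏ r, M r i₀ j ^ ((1 : ℝ) / m) := rfl
    _ ≤ ∏ r, (∑ j, M r i₀ j) ^ ((1 : ℝ) / m) :=
        holder_m hm Finset.univ (fun r j => M r i₀ j) (fun r j => hM r i₀ j)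
    _ ≤ ∏ r, ‖(M r).map Complex.ofReal‖ ^ ((1 : ℝ) / m) := by
        refine Finset.prod_le_prod (fun r _ =>
          Real.rpow_nonneg (Finset.sum_nonneg fun j _ => hM r i₀ j) _) fun r _ => ?_
        exact Real.rpow_le_rpow (Finset.sum_nonneg fun j _ => hM r i₀ j)
          (row_sum_le_norm (M r) (hM r) i₀) (by positivity)

private lemma spectralRadius_mul_comm {A : Type*} [Ring A] [Algebra ℂ A] (a b : A) :
    spectralRadius ℂ (a * b) = spectralRadius ℂ (b * a) := by
  have key : ∀ S : Set ℂ, ⨆ k ∈ S, (‖k‖₊ : ℝ≥0∞) = ⨆ k ∈ S \ {0}, (‖k‖₊ : ℝ≥0∞) := by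
    intro S
    refine le_antisymm (iSup₂_le fun k hk => ?_)
      (iSup₂_le fun k hk => le_iSup₂ (f := fun k (_ : k ∈ S) => (‖k‖₊ : ℝ≥0∞)) k hk.1)
    rcases eq_or_ne k 0 with rfl | hne
    · simp
    · exact le_iSup₂ (f := fun k (_ : k ∈ S \ {0}) => (‖k‖₊ : ℝ≥0∞)) k ⟨hk, hne⟩
  unfold spectralRadius
  rw [key (spectrum ℂ (a * b)), spectrum.nonzero_mul_comm,
    ← key (spectrum ℂ (b * a))]

end Aux

section Main

open Filter Finset Topology
open Fin.NatCast
open scoped ENNReal NNReal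

attribute [local instance] Matrix.linftyOpNormedRing Matrix.linftyOpNormedAlgebra
  Matrix.linftyOpNormedAddCommGroup

theorem stmt4 {m : ℕ} (hm : 0 < m) {N : Type*} [Fintype N] [DecidableEq N]
    (A : Fin m → Matrix N N ℝ) (hA : ∀ k, ∀ i j, 0 ≤ A k i j) :
    specRad (hadGeo A (fun _ => (1 : ℝ) / m)) ≤ specRad (List.ofFn A).prod ^ ((1 : ℝ) / m) := by
  classical
  haveI : NeZero m := ⟨hm.ne'⟩
  have hmR : (0 : ℝ) < m := by exact_mod_cast hm
  have hm0 : ((m : ℝ)) ≠ 0 := hmR.ne'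
  have hw : (0 : ℝ) < 1 / m := by positivity
  rcases isEmpty_or_nonempty N with hN | hN
  · haveI : Subsingleton (Matrix N N ℂ) :=
      ⟨fun a b => Matrix.ext fun i _ => (IsEmpty.false i).elim⟩
    have triv : ∀ X : Matrix N N ℝ, specRad X = 0 := by
      intro X
      have hs : spectrum ℂ (X.map Complex.ofReal) = ∅ := by
        ext z
        simp [spectrum.mem_iff, isUnit_of_subsingleton]
      unfold specRad spectralRadius
      rw [hs]
      simp
    rw [triv, triv]
    exact Real.rpow_nonneg le_rfl _
  · haveI : CompleteSpace (Matrix N N ℂ) := FiniteDimensional.complete ℂ _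
    -- complexification commutes with powers and products
    have map_one' : (1 : Matrix N N ℝ).map Complex.ofReal = 1 := by
      ext i j
      simp [Matrix.map_apply, Matrix.one_apply, apply_ite]
    have map_mul' : ∀ X Y : Matrix N N ℝ,
        (X * Y).map Complex.ofReal = X.map Complex.ofReal * Y.map Complex.ofReal := by
      intro X Y
      ext i j
      simp [Matrix.mul_apply, Matrix.map_apply]
    have map_pow' : ∀ (X : Matrix N N ℝ) (s : ℕ),
        (X ^ s).map Complex.ofReal = X.map Complex.ofReal ^ s := by
      intro X s
      induction s with
      | zero => rw [pow_zero, pow_zero, map_one']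
      | succ s ih => rw [pow_succ, pow_succ, map_mul', ih]
    set C : Matrix N N ℝ := hadGeo A (fun _ => (1 : ℝ) / m) with hCdef
    set P : Matrix N N ℝ := (List.ofFn A).prod with hPdef
    set Q : Fin m → Matrix N N ℝ := fun r => Wc A r m with hQdef
    have hCnn : ∀ i j, 0 ≤ C i j := hadGeo_nonneg A hA
    have hQnn : ∀ r i j, 0 ≤ Q r i j := fun r => Wc_nonneg A hA r m
    have hQknn : ∀ (r) (k : ℕ) (i j), 0 ≤ (Q r ^ k) i j := fun r k => pow_entry_nonneg (hQnn r) k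
    set L : ℝ≥0∞ := spectralRadius ℂ (C.map Complex.ofReal) with hLdef
    set R : ℝ≥0∞ := spectralRadius ℂ (P.map Complex.ofReal) with hRdef
    have hLne : L ≠ ⊤ :=
      ne_top_of_le_ne_top ENNReal.coe_ne_top (spectrum.spectralRadius_le_nnnorm (𝕜 := ℂ) (C.map Complex.ofReal))
    have hRne : R ≠ ⊤ :=
      ne_top_of_le_ne_top ENNReal.coe_ne_top (spectrum.spectralRadius_le_nnnorm (𝕜 := ℂ) (P.map Complex.ofReal))
    -- all cyclic shifts have the same spectral radius as `P`
    have hRQ : ∀ r : Fin m, spectralRadius ℂ ((Q r).map Complex.ofReal) = R := by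
      intro r
      have hsub : m - (r : ℕ) + (r : ℕ) = m := Nat.sub_add_cancel r.isLt.le
      have hcast : r + (((m - (r : ℕ) : ℕ)) : Fin m) = 0 := by
        have h := congrArg (fun t : ℕ => ((t : Fin m))) (Nat.add_sub_cancel' r.isLt.le)
        simp only [Nat.cast_add, Fin.cast_val_eq_self, Fin.natCast_self] at h
        exact h
      have h1 : Q r = Wc A r (m - (r : ℕ)) * Wc A 0 (r : ℕ) := by
        have h := Wc_add A r (m - (r : ℕ)) (r : ℕ)
        rw [hsub, hcast] at h
        exact h
      have h2 : P = Wc A 0 (r : ℕ) * Wc A r (m - (r : ℕ)) := by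
        have h := Wc_add A 0 (r : ℕ) (m - (r : ℕ))
        rw [Nat.add_sub_cancel' r.isLt.le, zero_add, Fin.cast_val_eq_self] at h
        rw [hPdef, ← Wc_zero_m A, h]
      rw [hRdef, h1, h2, map_mul', map_mul', spectralRadius_mul_comm]
    -- Gelfand's formula, real form
    have gelf : ∀ a : Matrix N N ℂ, spectralRadius ℂ a ≠ ⊤ →
        Tendsto (fun n : ℕ => ‖a ^ n‖ ^ (1 / (n : ℝ))) atTop (𝓝 (spectralRadius ℂ a).toReal) := by
      intro a ha
      have T := spectrum.pow_nnnorm_pow_one_div_tendsto_nhds_spectralRadius a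
      have T2 := (ENNReal.tendsto_toReal ha).comp T
      refine T2.congr fun n => ?_
      show (((‖a ^ n‖₊ : ℝ≥0∞)) ^ (1 / (n : ℝ))).toReal = ‖a ^ n‖ ^ (1 / (n : ℝ))
      rw [← ENNReal.toReal_rpow]
      simp
    set l : ℝ := L.toReal with hldef
    set p : ℝ := R.toReal with hpdef
    have hl0 : 0 ≤ l := ENNReal.toReal_nonneg
    have hp0 : 0 ≤ p := ENNReal.toReal_nonneg
    have TC : Tendsto (fun n : ℕ => ‖(C.map Complex.ofReal) ^ n‖ ^ (1 / (n : ℝ))) atTop (𝓝 l) :=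
      gelf _ hLne
    have TQ : ∀ r, Tendsto (fun k : ℕ => ‖((Q r).map Complex.ofReal) ^ k‖ ^ (1 / (k : ℝ)))
        atTop (𝓝 p) := by
      intro r
      have h := gelf ((Q r).map Complex.ofReal) (by rw [hRQ r]; exact hRne)
      rwa [hRQ r] at h
    have Tm : Tendsto (fun k : ℕ => m * k) atTop atTop :=
      Filter.tendsto_atTop_atTop_of_monotone (fun a b h => Nat.mul_le_mul_left m h)
        (fun b => ⟨b, Nat.le_mul_of_pos_left b hm⟩)
    have T3 : Tendsto (fun k : ℕ => (‖(C.map Complex.ofReal) ^ (m * k)‖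
        ^ (1 / ((m * k : ℕ) : ℝ))) ^ m) atTop (𝓝 (l ^ m)) := by
      have h := (TC.comp Tm).pow m
      exact h.congr fun k => by simp [Function.comp]
    have T5 : Tendsto (fun k : ℕ => ∏ r : Fin m,
        (‖((Q r).map Complex.ofReal) ^ k‖ ^ (1 / (k : ℝ))) ^ ((1 : ℝ) / m)) atTop
        (𝓝 (∏ _r : Fin m, p ^ ((1 : ℝ) / m))) :=
      tendsto_finset_prod _ fun r _ => (TQ r).rpow_const (Or.inr hw.le)
    -- the key norm inequality
    have key : ∀ k : ℕ, ‖(C.map Complex.ofReal) ^ (m * k)‖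
        ≤ ∏ r, ‖((Q r).map Complex.ofReal) ^ k‖ ^ ((1 : ℝ) / m) := by
      intro k
      rw [← map_pow']
      calc ‖(C ^ (m * k)).map Complex.ofReal‖
          ≤ ‖(hadGeo (fun r => Q r ^ k) (fun _ => (1 : ℝ) / m)).map Complex.ofReal‖ := by
            refine norm_map_mono (pow_entry_nonneg hCnn (m * k)) ?_
            intro i j
            have h := pow_hadGeo_le hm A hA (m * k) i j
            rwa [show (fun r => Wc A r (m * k)) = fun r => Q r ^ k from
              funext fun r => Wc_pow A r k] at h
        _ ≤ ∏ r, ‖((Q r) ^ k).map Complex.ofReal‖ ^ ((1 : ℝ) / m) :=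
            norm_hadGeo_le hm _ (fun r => hQknn r k)
        _ = ∏ r, ‖((Q r).map Complex.ofReal) ^ k‖ ^ ((1 : ℝ) / m) :=
            Finset.prod_congr rfl fun r _ => by rw [map_pow']
    -- rpow form of the key inequality
    have ineq2 : ∀ k : ℕ, 1 ≤ k →
        (‖(C.map Complex.ofReal) ^ (m * k)‖ ^ (1 / ((m * k : ℕ) : ℝ))) ^ m
          ≤ ∏ r, (‖((Q r).map Complex.ofReal) ^ k‖ ^ (1 / (k : ℝ))) ^ ((1 : ℝ) / m) := by
      intro k hk
      have hk0 : ((k : ℝ)) ≠ 0 := by positivity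
      have hB0 : (0 : ℝ) ≤ ‖(C.map Complex.ofReal) ^ (m * k)‖ := norm_nonneg _
      have lhs_eq : (‖(C.map Complex.ofReal) ^ (m * k)‖ ^ (1 / ((m * k : ℕ) : ℝ))) ^ m
          = ‖(C.map Complex.ofReal) ^ (m * k)‖ ^ (1 / (k : ℝ)) := by
        rw [← Real.rpow_natCast (_ ^ (1 / ((m * k : ℕ) : ℝ))) m, ← Real.rpow_mul hB0]
        congr 1
        rw [Nat.cast_mul]
        field_simp
      rw [lhs_eq]
      calc ‖(C.map Complex.ofReal) ^ (m * k)‖ ^ (1 / (k : ℝ))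
          ≤ (∏ r, ‖((Q r).map Complex.ofReal) ^ k‖ ^ ((1 : ℝ) / m)) ^ (1 / (k : ℝ)) :=
            Real.rpow_le_rpow hB0 (key k) (by positivity)
        _ = ∏ r, (‖((Q r).map Complex.ofReal) ^ k‖ ^ ((1 : ℝ) / m)) ^ (1 / (k : ℝ)) :=
            (Real.finset_prod_rpow _ _ (fun r _ => Real.rpow_nonneg (norm_nonneg _) _) _).symm
        _ = ∏ r, (‖((Q r).map Complex.ofReal) ^ k‖ ^ (1 / (k : ℝ))) ^ ((1 : ℝ) / m) := by
            refine Finset.prod_congr rfl fun r _ => ?_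
            rw [← Real.rpow_mul (norm_nonneg _), ← Real.rpow_mul (norm_nonneg _), mul_comm]
    -- pass to the limit
    have hprod : ∏ _r : Fin m, p ^ ((1 : ℝ) / m) = p := by
      rw [Finset.prod_const, Finset.card_univ, Fintype.card_fin,
        ← Real.rpow_natCast (p ^ ((1 : ℝ) / m)) m, ← Real.rpow_mul hp0,
        show ((1 : ℝ) / m) * (m : ℝ) = 1 by field_simp, Real.rpow_one]
    have hfin : l ^ m ≤ p := by
      rw [← hprod]
      refine le_of_tendsto_of_tendsto T3 T5 ?_
      filter_upwards [eventually_ge_atTop 1] with k hk using ineq2 k hk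
    have hlp : l ≤ p ^ ((1 : ℝ) / m) := by
      have h1 : l = (l ^ m) ^ ((1 : ℝ) / m) := by
        rw [← Real.rpow_natCast l m, ← Real.rpow_mul hl0,
          show ((m : ℝ)) * ((1 : ℝ) / m) = 1 by field_simp, Real.rpow_one]
      rw [h1]
      exact Real.rpow_le_rpow (pow_nonneg hl0 m) hfin hw.le
    show specRad C ≤ specRad P ^ ((1 : ℝ) / m)
    unfold specRad
    exact hlp

end Main
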